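/- arXiv:2002.11518 — 2 statements merged into one kernel-verified Lean document; each statement's English description precedes it below -/
import Mathlib

section
/- Finite model property of minimal logic: For every L-formula φ, MPC ⊢ φ if and only if φ is valid on every finite N-frame F that validates the axiom schema (ψ → ¬ψ) → ¬ψ (i.e., F ⊨ (ψ → ¬ψ) → ¬ψ for every L-formula ψ). In particular, if MPC ⊬ φ then there is a finite N-frame validating all theorems of MPC on which φ fails. -/
inductive Form : Type
  | var : ℕ → Form
  | top : Form
  | and : Form → Form → Form
  | or : Form → Form → Form
  | imp : Form → Form → Form
  | neg : Form → Form

def IsUpset {W : Type*} (le : W → W → Prop) (X : Set W) : Prop :=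
  ∀ ⦃w v : W⦄, le w v → w ∈ X → v ∈ X

def Sat {W : Type*} (le : W → W → Prop) (N : Set W → Set W) (V : ℕ → Set W) : Form → Set W
  | .var p => V p
  | .top => Set.univ
  | .and φ ψ => Sat le N V φ ∩ Sat le N V ψ
  | .or φ ψ => Sat le N V φ ∪ Sat le N V ψ
  | .imp φ ψ => {w | ∀ v, le w v → v ∈ Sat le N V φ → v ∈ Sat le N V ψ}
  | .neg φ => N (Sat le N V φ)

def ValidOn {W : Type*} (le : W → W → Prop) (N : Set W → Set W) (φ : Form) : Prop :=
  ∀ V : ℕ → Set W, (∀ p, IsUpset le (V p)) → ∀ w, w ∈ Sat le N V φ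

def Form.iff (φ ψ : Form) : Form := (φ.imp ψ).and (ψ.imp φ)

inductive Deriv (Ax : Form → Prop) : Form → Prop
  | ax : ∀ {φ : Form}, Ax φ → Deriv Ax φ
  | imp1 : ∀ φ ψ : Form, Deriv Ax (φ.imp (ψ.imp φ))
  | imp2 : ∀ φ ψ χ : Form, Deriv Ax ((φ.imp (ψ.imp χ)).imp ((φ.imp ψ).imp (φ.imp χ)))
  | topI : Deriv Ax Form.top
  | andE1 : ∀ φ ψ : Form, Deriv Ax ((φ.and ψ).imp φ)
  | andE2 : ∀ φ ψ : Form, Deriv Ax ((φ.and ψ).imp ψ)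
  | andI : ∀ φ ψ : Form, Deriv Ax (φ.imp (ψ.imp (φ.and ψ)))
  | orI1 : ∀ φ ψ : Form, Deriv Ax (φ.imp (φ.or ψ))
  | orI2 : ∀ φ ψ : Form, Deriv Ax (ψ.imp (φ.or ψ))
  | orE : ∀ φ ψ χ : Form, Deriv Ax ((φ.imp χ).imp ((ψ.imp χ).imp ((φ.or ψ).imp χ)))
  | negAx : ∀ φ ψ : Form, Deriv Ax ((Form.iff φ ψ).imp (Form.iff φ.neg ψ.neg))
  | mp : ∀ {φ ψ : Form}, Deriv Ax (φ.imp ψ) → Deriv Ax φ → Deriv Ax ψ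

def NThm : Form → Prop := Deriv fun _ => False

def NeFThm : Form → Prop := Deriv fun χ => ∃ φ ψ : Form, χ = (φ.and φ.neg).imp ψ.neg

def CoPCThm : Form → Prop := Deriv fun χ => ∃ φ ψ : Form, χ = (φ.imp ψ).imp (ψ.neg.imp φ.neg)

def MPCThm : Form → Prop := Deriv fun χ => ∃ φ : Form, χ = (φ.imp φ.neg).imp φ.neg


-- ===== auxiliary development =====

deriving instance DecidableEq for Form

theorem Deriv.mono {Ax Ax' : Form → Prop} (h : ∀ χ, Ax χ → Ax' χ) :
    ∀ {φ}, Deriv Ax φ → Deriv Ax' φ := by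
  intro φ hd
  induction hd with
  | ax ha => exact .ax (h _ ha)
  | imp1 a b => exact .imp1 a b
  | imp2 a b c => exact .imp2 a b c
  | topI => exact .topI
  | andE1 a b => exact .andE1 a b
  | andE2 a b => exact .andE2 a b
  | andI a b => exact .andI a b
  | orI1 a b => exact .orI1 a b
  | orI2 a b => exact .orI2 a b
  | orE a b c => exact .orE a b c
  | negAx a b => exact .negAx a b
  | mp _ _ ih1 ih2 => exact .mp ih1 ih2

theorem Deriv.idd {Ax : Form → Prop} (φ : Form) : Deriv Ax (φ.imp φ) :=
  .mp (.mp (.imp2 φ (φ.imp φ) φ) (.imp1 φ (φ.imp φ))) (.imp1 φ φ)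

/-- Deduction theorem. -/
theorem deduction {Ax : Form → Prop} {Γ : Set Form} {ψ φ : Form}
    (h : Deriv (fun χ => Ax χ ∨ χ ∈ insert ψ Γ) φ) :
    Deriv (fun χ => Ax χ ∨ χ ∈ Γ) (ψ.imp φ) := by
  induction h with
  | @ax χ ha =>
    rcases ha with ha | ha
    · exact .mp (.imp1 χ ψ) (.ax (Or.inl ha))
    · rcases Set.mem_insert_iff.1 ha with rfl | ha
      · exact Deriv.idd χ
      · exact .mp (.imp1 χ ψ) (.ax (Or.inr ha))
  | imp1 a b => exact .mp (.imp1 _ ψ) (.imp1 a b)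
  | imp2 a b c => exact .mp (.imp1 _ ψ) (.imp2 a b c)
  | topI => exact .mp (.imp1 _ ψ) .topI
  | andE1 a b => exact .mp (.imp1 _ ψ) (.andE1 a b)
  | andE2 a b => exact .mp (.imp1 _ ψ) (.andE2 a b)
  | andI a b => exact .mp (.imp1 _ ψ) (.andI a b)
  | orI1 a b => exact .mp (.imp1 _ ψ) (.orI1 a b)
  | orI2 a b => exact .mp (.imp1 _ ψ) (.orI2 a b)
  | orE a b c => exact .mp (.imp1 _ ψ) (.orE a b c)
  | negAx a b => exact .mp (.imp1 _ ψ) (.negAx a b)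
  | @mp a b _ _ ih1 ih2 => exact .mp (.mp (.imp2 ψ a b) ih1) ih2

def MPCAx : Form → Prop := fun χ => ∃ φ : Form, χ = (φ.imp φ.neg).imp φ.neg

/-- Derivability from premises in MPC. -/
def DF (Γ : Set Form) (φ : Form) : Prop :=
  Deriv (fun χ => MPCAx χ ∨ χ ∈ Γ) φ

theorem DF.prem {Γ : Set Form} {ψ : Form} (h : ψ ∈ Γ) : DF Γ ψ := .ax (Or.inr h)

theorem DF.mpcax {Γ : Set Form} (φ : Form) : DF Γ ((φ.imp φ.neg).imp φ.neg) :=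
  .ax (Or.inl ⟨φ, rfl⟩)

theorem DF.ded {Γ : Set Form} {ψ φ : Form} (h : DF (insert ψ Γ) φ) : DF Γ (ψ.imp φ) :=
  deduction h

theorem DF.weaken {Γ Γ' : Set Form} {φ : Form} (hs : Γ ⊆ Γ') (h : DF Γ φ) : DF Γ' φ :=
  Deriv.mono (fun χ hχ => hχ.imp id (fun hh => hs hh)) h

theorem DF.cut {Γ : Set Form} {ψ φ : Form} (h1 : DF Γ ψ) (h2 : DF (insert ψ Γ) φ) :
    DF Γ φ := .mp h2.ded h1

theorem MPCThm_iff_DF {φ : Form} : MPCThm φ ↔ DF ∅ φ := by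
  constructor
  · exact Deriv.mono (fun χ h => Or.inl h)
  · exact Deriv.mono (fun χ h => h.elim id (fun h => absurd h (Set.notMem_empty χ)))

/-- In MPC, from φ and ¬φ derive ¬⊤. -/
theorem lem_neg1 {Γ : Set Form} (φ : Form) : DF Γ (φ.imp (φ.neg.imp Form.top.neg)) := by
  apply DF.ded; apply DF.ded
  have hφ : DF (insert φ.neg (insert φ Γ)) φ := .prem (by simp)
  have hnφ : DF (insert φ.neg (insert φ Γ)) φ.neg := .prem (by simp)
  have h1 : DF (insert φ.neg (insert φ Γ)) (φ.imp Form.top) :=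
    .mp (.imp1 Form.top φ) .topI
  have h2 : DF (insert φ.neg (insert φ Γ)) (Form.top.imp φ) :=
    .mp (.imp1 φ Form.top) hφ
  have hiff : DF (insert φ.neg (insert φ Γ)) (Form.iff φ Form.top) :=
    .mp (.mp (.andI _ _) h1) h2
  have hniff : DF (insert φ.neg (insert φ Γ)) (Form.iff φ.neg Form.top.neg) :=
    .mp (.negAx φ Form.top) hiff
  exact .mp (.mp (.andE1 _ _) hniff) hnφ

/-- In MPC, (φ → ¬⊤) → ¬φ. -/
theorem lem_neg2 {Γ : Set Form} (φ : Form) : DF Γ ((φ.imp Form.top.neg).imp φ.neg) := by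
  apply DF.ded
  set Γ' : Set Form := insert (φ.imp Form.top.neg) Γ with hΓ'
  have key : DF Γ' (φ.imp φ.neg) := by
    apply DF.ded
    have hφ : DF (insert φ Γ') φ := .prem (by simp)
    have hnt : DF (insert φ Γ') Form.top.neg :=
      .mp (DF.prem (show φ.imp Form.top.neg ∈ insert φ Γ' by simp [hΓ'])) hφ
    have h1 : DF (insert φ Γ') (φ.imp Form.top) := .mp (.imp1 Form.top φ) .topI
    have h2 : DF (insert φ Γ') (Form.top.imp φ) := .mp (.imp1 φ Form.top) hφ
    have hiff : DF (insert φ Γ') (Form.iff φ Form.top) := .mp (.mp (.andI _ _) h1) h2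
    have hniff : DF (insert φ Γ') (Form.iff φ.neg Form.top.neg) := .mp (.negAx φ Form.top) hiff
    exact .mp (.mp (.andE2 _ _) hniff) hnt
  exact .mp (DF.mpcax φ) key

section Semantics

variable {W : Type} (le : W → W → Prop) (N : Set W → Set W)

theorem sat_upset (htrans : ∀ a b c, le a b → le b c → le a c)
    (hN1 : ∀ X, IsUpset le X → IsUpset le (N X))
    (V : ℕ → Set W) (hV : ∀ p, IsUpset le (V p)) :
    ∀ χ : Form, IsUpset le (Sat le N V χ) := by
  intro χ
  induction χ with
  | var p => exact hV p
  | top => intro _ _ _ _; trivial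
  | and a b iha ihb => intro w v hle hw; exact ⟨iha hle hw.1, ihb hle hw.2⟩
  | or a b iha ihb =>
    intro w v hle hw
    exact hw.elim (fun h => Or.inl (iha hle h)) (fun h => Or.inr (ihb hle h))
  | imp a b iha ihb =>
    intro w v hle hw u hvu hu
    exact hw u (htrans _ _ _ hle hvu) hu
  | neg a iha => exact hN1 _ iha

theorem soundness (hrefl : ∀ w, le w w) (htrans : ∀ a b c, le a b → le b c → le a c)
    (hN1 : ∀ X, IsUpset le X → IsUpset le (N X))
    (hN2 : ∀ X Y, IsUpset le X → IsUpset le Y → N X ∩ Y = N (X ∩ Y) ∩ Y)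
    (hschema : ∀ ψ : Form, ValidOn le N ((ψ.imp ψ.neg).imp ψ.neg)) :
    ∀ φ : Form, MPCThm φ → ValidOn le N φ := by
  intro φ hφ
  induction hφ with
  | ax ha =>
    obtain ⟨ψ, rfl⟩ := ha
    exact hschema ψ
  | imp1 a b =>
    intro V hV w v hwv hv u hvu hu
    exact sat_upset le N htrans hN1 V hV a hvu hv
  | imp2 a b c =>
    intro V hV w v hwv hv u hvu hu t hut ht
    exact hv t (htrans _ _ _ hvu hut) ht t (hrefl t) (hu t hut ht)
  | topI => intro V hV w; trivial
  | andE1 a b => intro V hV w v hwv hv; exact hv.1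
  | andE2 a b => intro V hV w v hwv hv; exact hv.2
  | andI a b =>
    intro V hV w v hwv hv u hvu hu
    exact ⟨sat_upset le N htrans hN1 V hV a hvu hv, hu⟩
  | orI1 a b => intro V hV w v hwv hv; exact Or.inl hv
  | orI2 a b => intro V hV w v hwv hv; exact Or.inr hv
  | orE a b c =>
    intro V hV w v hwv hv u hvu hu t hut ht
    rcases ht with h | h
    · exact hv t (htrans _ _ _ hvu hut) h
    · exact hu t hut h
  | negAx a b =>
    intro V hV w v hwv hv
    have hA : IsUpset le (Sat le N V a) := sat_upset le N htrans hN1 V hV a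
    have hB : IsUpset le (Sat le N V b) := sat_upset le N htrans hN1 V hV b
    have hY : IsUpset le {x | le v x} := fun x y hxy hx => htrans _ _ _ hx hxy
    have hAB : Sat le N V a ∩ {x | le v x} = Sat le N V b ∩ {x | le v x} := by
      ext x
      constructor
      · rintro ⟨hxa, hxv⟩; exact ⟨hv.1 x hxv hxa, hxv⟩
      · rintro ⟨hxb, hxv⟩; exact ⟨hv.2 x hxv hxb, hxv⟩
    have hkey : N (Sat le N V a) ∩ {x | le v x} = N (Sat le N V b) ∩ {x | le v x} := by
      rw [hN2 _ _ hA hY, hN2 _ _ hB hY, hAB]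
    constructor
    · intro u hvu hu
      have : u ∈ N (Sat le N V b) ∩ {x | le v x} := by
        rw [← hkey]; exact ⟨hu, hvu⟩
      exact this.1
    · intro u hvu hu
      have : u ∈ N (Sat le N V a) ∩ {x | le v x} := by
        rw [hkey]; exact ⟨hu, hvu⟩
      exact this.1
  | mp h1 h2 ih1 ih2 =>
    intro V hV w
    exact ih1 V hV w w (hrefl w) (ih2 V hV w)

end Semantics

-- ===== canonical finite model =====

def subf : Form → Finset Form
  | .var p => {.var p}
  | .top => {.top}
  | .and a b => insert (a.and b) (subf a ∪ subf b)
  | .or a b => insert (a.or b) (subf a ∪ subf b)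
  | .imp a b => insert (a.imp b) (subf a ∪ subf b)
  | .neg a => insert a.neg (subf a)

theorem mem_subf_self : ∀ χ : Form, χ ∈ subf χ := by
  intro χ; cases χ <;> simp [subf]

theorem subf_trans : ∀ χ ψ : Form, ψ ∈ subf χ → subf ψ ⊆ subf χ := by
  intro χ
  induction χ with
  | var p => intro ψ h; simp [subf] at h; subst h; simp [subf]
  | top => intro ψ h; simp [subf] at h; subst h; simp [subf]
  | and a b iha ihb =>
    intro ψ h
    simp only [subf, Finset.mem_insert, Finset.mem_union] at h
    rcases h with rfl | h | h
    · exact subset_refl _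
    · exact (iha ψ h).trans ((Finset.subset_union_left).trans (Finset.subset_insert _ _))
    · exact (ihb ψ h).trans ((Finset.subset_union_right).trans (Finset.subset_insert _ _))
  | or a b iha ihb =>
    intro ψ h
    simp only [subf, Finset.mem_insert, Finset.mem_union] at h
    rcases h with rfl | h | h
    · exact subset_refl _
    · exact (iha ψ h).trans ((Finset.subset_union_left).trans (Finset.subset_insert _ _))
    · exact (ihb ψ h).trans ((Finset.subset_union_right).trans (Finset.subset_insert _ _))
  | imp a b iha ihb =>
    intro ψ h
    simp only [subf, Finset.mem_insert, Finset.mem_union] at h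
    rcases h with rfl | h | h
    · exact subset_refl _
    · exact (iha ψ h).trans ((Finset.subset_union_left).trans (Finset.subset_insert _ _))
    · exact (ihb ψ h).trans ((Finset.subset_union_right).trans (Finset.subset_insert _ _))
  | neg a iha =>
    intro ψ h
    simp only [subf, Finset.mem_insert] at h
    rcases h with rfl | h
    · exact subset_refl _
    · exact (iha ψ h).trans (Finset.subset_insert _ _)

def Sg (φ0 : Form) : Finset Form := subf φ0 ∪ subf (Form.neg Form.top)

theorem negtop_mem_Sg (φ0 : Form) : Form.top.neg ∈ Sg φ0 :=
  Finset.mem_union_right _ (mem_subf_self _)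

theorem sg_sub {φ0 : Form} {ψ : Form} (h : ψ ∈ Sg φ0) : subf ψ ⊆ Sg φ0 := by
  rcases Finset.mem_union.1 h with h | h
  · exact (subf_trans _ _ h).trans Finset.subset_union_left
  · exact (subf_trans _ _ h).trans Finset.subset_union_right

def Th (φ0 : Form) (Γ : Finset Form) : Prop :=
  Γ ⊆ Sg φ0 ∧ (∀ χ ∈ Sg φ0, DF ↑Γ χ → χ ∈ Γ) ∧
    (∀ a b : Form, a.or b ∈ Γ → a ∈ Γ ∨ b ∈ Γ)

def CW (φ0 : Form) : Type := {Γ : Finset Form // Th φ0 Γ}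

def cle (φ0 : Form) : CW φ0 → CW φ0 → Prop := fun Γ Δ => Γ.1 ⊆ Δ.1

def cN (φ0 : Form) : Set (CW φ0) → Set (CW φ0) :=
  fun X => {Γ | ∀ Δ : CW φ0, Γ.1 ⊆ Δ.1 → Δ ∈ X → Form.top.neg ∈ Δ.1}

def cV (φ0 : Form) : ℕ → Set (CW φ0) := fun p => {Γ | Form.var p ∈ Γ.1}

theorem cW_finite (φ0 : Form) : Finite (CW φ0) := by
  have h : {Γ : Finset Form | Th φ0 Γ}.Finite :=
    (Sg φ0).powerset.finite_toSet.subset (fun Γ hΓ => Finset.mem_powerset.2 hΓ.1)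
  exact h.to_subtype

theorem lindenbaum (φ0 : Form) {Γ : Finset Form} (hΓ : Γ ⊆ Sg φ0) {χ : Form}
    (hnd : ¬ DF ↑Γ χ) : ∃ Δ : CW φ0, Γ ⊆ Δ.1 ∧ χ ∉ Δ.1 := by
  classical
  let S : Finset (Finset Form) := (Sg φ0).powerset.filter (fun Δ => Γ ⊆ Δ ∧ ¬ DF ↑Δ χ)
  have hGS : Γ ∈ S := by
    simp only [S, Finset.mem_filter, Finset.mem_powerset]
    exact ⟨hΓ, subset_refl _, hnd⟩
  obtain ⟨Δ, hΔS, hmax⟩ := S.exists_maximal ⟨Γ, hGS⟩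
  simp only [S, Finset.mem_filter, Finset.mem_powerset] at hΔS
  obtain ⟨hΔSg, hΓΔ, hΔnd⟩ := hΔS
  have hmax' : ∀ ψ ∈ Sg φ0, ψ ∉ Δ → DF ↑(insert ψ Δ) χ := by
    intro ψ hψSg hψΔ
    by_contra hcon
    have hmem : insert ψ Δ ∈ S := by
      simp only [S, Finset.mem_filter, Finset.mem_powerset]
      exact ⟨Finset.insert_subset hψSg hΔSg, hΓΔ.trans (Finset.subset_insert _ _), hcon⟩
    exact hψΔ (hmax hmem (Finset.subset_insert _ _) (Finset.mem_insert_self ψ Δ))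
  refine ⟨⟨Δ, hΔSg, ?_, ?_⟩, hΓΔ, ?_⟩
  · -- closed
    intro ψ hψSg hder
    by_contra hψΔ
    have h2 := hmax' ψ hψSg hψΔ
    rw [Finset.coe_insert] at h2
    exact hΔnd (DF.cut hder h2)
  · -- prime
    intro a b hab
    by_contra hcon
    push_neg at hcon
    obtain ⟨ha, hb⟩ := hcon
    have habSg : a.or b ∈ Sg φ0 := hΔSg hab
    have haSg : a ∈ Sg φ0 := sg_sub habSg (by simp [subf, mem_subf_self])
    have hbSg : b ∈ Sg φ0 := sg_sub habSg (by simp [subf, mem_subf_self])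
    have h1 := hmax' a haSg ha
    have h2 := hmax' b hbSg hb
    rw [Finset.coe_insert] at h1 h2
    have d1 : DF ↑Δ (a.imp χ) := h1.ded
    have d2 : DF ↑Δ (b.imp χ) := h2.ded
    exact hΔnd (.mp (.mp (.mp (.orE a b χ) d1) d2) (DF.prem (Finset.mem_coe.2 hab)))
  · -- χ ∉ Δ
    intro hχ
    exact hΔnd (DF.prem (Finset.mem_coe.2 hχ))

theorem truth (φ0 : Form) :
    ∀ χ : Form, χ ∈ Sg φ0 → ∀ Γ : CW φ0,
      (Γ ∈ Sat (cle φ0) (cN φ0) (cV φ0) χ ↔ χ ∈ Γ.1) := by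
  intro χ
  induction χ with
  | var p => intro _ Γ; exact Iff.rfl
  | top =>
    intro h Γ
    simp only [Sat, Set.mem_univ, true_iff]
    exact Γ.2.2.1 _ h .topI
  | and a b iha ihb =>
    intro h Γ
    have haSg : a ∈ Sg φ0 := sg_sub h (by simp [subf, mem_subf_self])
    have hbSg : b ∈ Sg φ0 := sg_sub h (by simp [subf, mem_subf_self])
    constructor
    · rintro ⟨h1, h2⟩
      exact Γ.2.2.1 _ h (.mp (.mp (.andI a b)
        (DF.prem (Finset.mem_coe.2 ((iha haSg Γ).1 h1))))
        (DF.prem (Finset.mem_coe.2 ((ihb hbSg Γ).1 h2))))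
    · intro hmem
      have hp : DF (↑Γ.1) (a.and b) := DF.prem (Finset.mem_coe.2 hmem)
      exact ⟨(iha haSg Γ).2 (Γ.2.2.1 _ haSg (.mp (.andE1 a b) hp)),
             (ihb hbSg Γ).2 (Γ.2.2.1 _ hbSg (.mp (.andE2 a b) hp))⟩
  | or a b iha ihb =>
    intro h Γ
    have haSg : a ∈ Sg φ0 := sg_sub h (by simp [subf, mem_subf_self])
    have hbSg : b ∈ Sg φ0 := sg_sub h (by simp [subf, mem_subf_self])
    constructor
    · rintro (h1 | h1)
      · exact Γ.2.2.1 _ h (.mp (.orI1 a b) (DF.prem (Finset.mem_coe.2 ((iha haSg Γ).1 h1))))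
      · exact Γ.2.2.1 _ h (.mp (.orI2 a b) (DF.prem (Finset.mem_coe.2 ((ihb hbSg Γ).1 h1))))
    · intro hmem
      rcases Γ.2.2.2 a b hmem with h1 | h1
      · exact Or.inl ((iha haSg Γ).2 h1)
      · exact Or.inr ((ihb hbSg Γ).2 h1)
  | imp a b iha ihb =>
    intro h Γ
    have haSg : a ∈ Sg φ0 := sg_sub h (by simp [subf, mem_subf_self])
    have hbSg : b ∈ Sg φ0 := sg_sub h (by simp [subf, mem_subf_self])
    constructor
    · intro hsat
      by_contra hmem
      have hnd : ¬ DF ↑(insert a Γ.1) b := by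
        intro hd
        rw [Finset.coe_insert] at hd
        exact hmem (Γ.2.2.1 _ h hd.ded)
      obtain ⟨Δ, hsub, hbΔ⟩ := lindenbaum φ0 (Finset.insert_subset haSg Γ.2.1) hnd
      have haΔ : a ∈ Δ.1 := hsub (Finset.mem_insert_self a Γ.1)
      have hleΓΔ : cle φ0 Γ Δ := fun x hx => hsub (Finset.mem_insert_of_mem hx)
      have := hsat Δ hleΓΔ ((iha haSg Δ).2 haΔ)
      exact hbΔ ((ihb hbSg Δ).1 this)
    · intro hmem Δ hle hsatA
      have haΔ : a ∈ Δ.1 := (iha haSg Δ).1 hsatA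
      apply (ihb hbSg Δ).2
      exact Δ.2.2.1 _ hbSg (.mp (DF.prem (Finset.mem_coe.2 (hle hmem)))
        (DF.prem (Finset.mem_coe.2 haΔ)))
  | neg a iha =>
    intro h Γ
    have haSg : a ∈ Sg φ0 := sg_sub h (by simp [subf, mem_subf_self])
    constructor
    · intro hsat
      have hnd : DF ↑(insert a Γ.1) Form.top.neg := by
        by_contra hnd
        obtain ⟨Δ, hsub, hntΔ⟩ := lindenbaum φ0 (Finset.insert_subset haSg Γ.2.1) hnd
        have haΔ : a ∈ Δ.1 := hsub (Finset.mem_insert_self a Γ.1)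
        have hleΓΔ : (Γ : CW φ0).1 ⊆ Δ.1 := fun x hx => hsub (Finset.mem_insert_of_mem hx)
        exact hntΔ (hsat Δ hleΓΔ ((iha haSg Δ).2 haΔ))
      rw [Finset.coe_insert] at hnd
      exact Γ.2.2.1 _ h (.mp (lem_neg2 a) hnd.ded)
    · intro hmem Δ hle hsatA
      have haΔ : a ∈ Δ.1 := (iha haSg Δ).1 hsatA
      refine Δ.2.2.1 _ (negtop_mem_Sg φ0) ?_
      exact .mp (.mp (lem_neg1 a) (DF.prem (Finset.mem_coe.2 haΔ)))
        (DF.prem (Finset.mem_coe.2 (hle hmem)))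

theorem cN_upset (φ0 : Form) (X : Set (CW φ0)) : IsUpset (cle φ0) (cN φ0 X) := by
  intro Γ Δ hle hΓ Δ' hle' hX
  exact hΓ Δ' (fun x hx => hle' (hle hx)) hX

theorem cN_local (φ0 : Form) (X Y : Set (CW φ0)) (hY : IsUpset (cle φ0) Y) :
    cN φ0 X ∩ Y = cN φ0 (X ∩ Y) ∩ Y := by
  ext Γ
  constructor
  · rintro ⟨hN, hYΓ⟩
    exact ⟨fun Δ hle hXY => hN Δ hle hXY.1, hYΓ⟩
  · rintro ⟨hN, hYΓ⟩
    exact ⟨fun Δ hle hX => hN Δ hle ⟨hX, hY hle hYΓ⟩, hYΓ⟩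

theorem c_schema (φ0 : Form) (ψ : Form) :
    ValidOn (cle φ0) (cN φ0) ((ψ.imp ψ.neg).imp ψ.neg) := by
  intro V hV w v hwv hv
  intro Δ hvΔ hΔ
  have hnΔ : Δ ∈ cN φ0 (Sat (cle φ0) (cN φ0) V ψ) := hv Δ hvΔ hΔ
  exact hnΔ Δ (subset_refl _) hΔ

theorem canonical_refutes {φ0 : Form} (h : ¬ MPCThm φ0) :
    ¬ ValidOn (cle φ0) (cN φ0) φ0 := by
  intro hval
  have hnd : ¬ DF (↑(∅ : Finset Form)) φ0 := by
    intro hd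
    rw [Finset.coe_empty] at hd
    exact h (MPCThm_iff_DF.2 hd)
  obtain ⟨Δ, _, hφΔ⟩ := lindenbaum φ0 (Finset.empty_subset _) hnd
  have hφSg : φ0 ∈ Sg φ0 := Finset.mem_union_left _ (mem_subf_self φ0)
  have hVup : ∀ p, IsUpset (cle φ0) (cV φ0 p) := fun p Γ Δ' hle hΓ => hle hΓ
  exact hφΔ ((truth φ0 φ0 hφSg Δ).1 (hval (cV φ0) hVup Δ))

theorem cle_refl (φ0 : Form) : ∀ w, cle φ0 w w := fun _ => subset_refl _
theorem cle_trans (φ0 : Form) : ∀ a b c, cle φ0 a b → cle φ0 b c → cle φ0 a c :=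
  fun _ _ _ h1 h2 x hx => h2 (h1 hx)
theorem cle_anti (φ0 : Form) : ∀ a b, cle φ0 a b → cle φ0 b a → a = b :=
  fun _ _ h1 h2 => Subtype.ext (Finset.Subset.antisymm h1 h2)

/-- Finite model property of minimal logic: `MPC ⊢ φ` iff `φ` is valid on every
finite N-frame validating the schema `(ψ → ¬ψ) → ¬ψ`; in particular every
non-theorem is refuted on a finite N-frame validating all theorems of `MPC`. -/
theorem stmt11 (φ : Form) :
    (MPCThm φ ↔
      ∀ (W : Type) (le : W → W → Prop),
        (∀ w, le w w) → (∀ a b c, le a b → le b c → le a c) →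
        (∀ a b, le a b → le b a → a = b) →
        ∀ N : Set W → Set W,
          (∀ X, IsUpset le X → IsUpset le (N X)) →
          (∀ X Y, IsUpset le X → IsUpset le Y → N X ∩ Y = N (X ∩ Y) ∩ Y) →
          Finite W →
          (∀ ψ : Form, ValidOn le N ((ψ.imp ψ.neg).imp ψ.neg)) →
          ValidOn le N φ) ∧
    (¬ MPCThm φ →
      ∃ (W : Type) (le : W → W → Prop) (N : Set W → Set W),
        (∀ w, le w w) ∧ (∀ a b c, le a b → le b c → le a c) ∧
        (∀ a b, le a b → le b a → a = b) ∧
        (∀ X, IsUpset le X → IsUpset le (N X)) ∧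
        (∀ X Y, IsUpset le X → IsUpset le Y → N X ∩ Y = N (X ∩ Y) ∩ Y) ∧
        Finite W ∧
        (∀ ψ : Form, MPCThm ψ → ValidOn le N ψ) ∧
        ¬ ValidOn le N φ) := by
  constructor
  · constructor
    · intro hφ W le hrefl htrans hanti N hN1 hN2 hfin hschema
      exact soundness le N hrefl htrans hN1 hN2 hschema φ hφ
    · intro hval
      by_contra hφ
      exact canonical_refutes hφ
        (hval (CW φ) (cle φ) (cle_refl φ) (cle_trans φ) (cle_anti φ) (cN φ)
          (fun X _ => cN_upset φ X) (fun X Y _ hY => cN_local φ X Y hY)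
          (cW_finite φ) (c_schema φ))
  · intro hφ
    refine ⟨CW φ, cle φ, cN φ, cle_refl φ, cle_trans φ, cle_anti φ,
      (fun X _ => cN_upset φ X), (fun X Y _ hY => cN_local φ X Y hY), cW_finite φ,
      ?_, canonical_refutes hφ⟩
    intro ψ hψ
    exact soundness (cle φ) (cN φ) (cle_refl φ) (cle_trans φ)
      (fun X _ => cN_upset φ X) (fun X Y _ hY => cN_local φ X Y hY) (c_schema φ) ψ hψ
end

section
/- Let M = (W, ≤, N, V) be an N-model for the language L, and define N* on arbitrary subsets of W by N*(X) = {w ∈ W : there exists an upward-closed Y ⊆ W with X ∩ R(w) = Y ∩ R(w) and w ∈ N(Y)}. Then (W, ≤, N*) is an N-frame for NS4, and for every L-formula φ and every w ∈ W: M, w ⊨ φ (in the N-semantics) if and only if (W, ≤, N*, V), w ⊨ φ^□ (in the NS4 semantics). -/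
inductive MForm : Type
  | var : ℕ → MForm
  | bot : MForm
  | top : MForm
  | and : MForm → MForm → MForm
  | or : MForm → MForm → MForm
  | imp : MForm → MForm → MForm
  | box : MForm → MForm
  | bbox : MForm → MForm

def MForm.miff (φ ψ : MForm) : MForm := (φ.imp ψ).and (ψ.imp φ)

def MTaut (φ : MForm) : Prop :=
  ∀ v : MForm → Bool,
    v MForm.bot = false → v MForm.top = true →
    (∀ a b : MForm, v (a.and b) = (v a && v b)) →
    (∀ a b : MForm, v (a.or b) = (v a || v b)) →
    (∀ a b : MForm, v (a.imp b) = (!(v a) || v b)) →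
    v φ = true

inductive NS4 : MForm → Prop
  | taut : ∀ {φ : MForm}, MTaut φ → NS4 φ
  | axK : ∀ φ ψ : MForm, NS4 (((φ.imp ψ).box).imp ((φ.box).imp (ψ.box)))
  | axT : ∀ φ : MForm, NS4 ((φ.box).imp φ)
  | ax4 : ∀ φ : MForm, NS4 ((φ.box).imp (φ.box.box))
  | axN : ∀ φ ψ : MForm, NS4 (((φ.miff ψ).box).imp ((φ.bbox).miff (ψ.bbox)))
  | axB : ∀ φ : MForm, NS4 ((φ.bbox).imp (φ.bbox.box))
  | mp : ∀ {φ ψ : MForm}, NS4 (φ.imp ψ) → NS4 φ → NS4 ψ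
  | nec : ∀ {φ : MForm}, NS4 φ → NS4 (φ.box)

def MSat {W : Type*} (le : W → W → Prop) (N : Set W → Set W) (V : ℕ → Set W) : MForm → Set W
  | .var p => V p
  | .bot => ∅
  | .top => Set.univ
  | .and φ ψ => MSat le N V φ ∩ MSat le N V ψ
  | .or φ ψ => MSat le N V φ ∪ MSat le N V ψ
  | .imp φ ψ => {w | w ∈ MSat le N V φ → w ∈ MSat le N V ψ}
  | .box φ => {w | ∀ v, le w v → v ∈ MSat le N V φ}
  | .bbox φ => N (MSat le N V φ)

def godelT : Form → MForm
  | .var p => (MForm.var p).box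
  | .top => MForm.top
  | .and φ ψ => (godelT φ).and (godelT ψ)
  | .or φ ψ => (godelT φ).or (godelT ψ)
  | .imp φ ψ => ((godelT φ).imp (godelT ψ)).box
  | .neg φ => (godelT φ).bbox

/-- The NS4 neighbourhood function induced by an N-frame. -/
def NStar {W : Type*} (le : W → W → Prop) (N : Set W → Set W) : Set W → Set W :=
  fun X => {w | ∃ Y : Set W, IsUpset le Y ∧ X ∩ {v | le w v} = Y ∩ {v | le w v} ∧ w ∈ N Y}


lemma satUpset {W : Type*} (le : W → W → Prop)
    (htrans : ∀ a b c, le a b → le b c → le a c)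
    (N : Set W → Set W)
    (hNup : ∀ X, IsUpset le X → IsUpset le (N X))
    (V : ℕ → Set W) (hV : ∀ p, IsUpset le (V p)) :
    ∀ φ : Form, IsUpset le (Sat le N V φ) := by
  intro φ
  induction φ with
  | var p => exact hV p
  | top => intro w v _ _; trivial
  | and φ ψ ihφ ihψ =>
      intro w v h hw
      exact ⟨ihφ h hw.1, ihψ h hw.2⟩
  | or φ ψ ihφ ihψ =>
      intro w v h hw
      exact hw.elim (fun h1 => Or.inl (ihφ h h1)) (fun h1 => Or.inr (ihψ h h1))
  | imp φ ψ ihφ ihψ =>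
      intro w v h hw u hvu hu
      exact hw u (htrans _ _ _ h hvu) hu
  | neg φ ih => exact hNup _ ih

/-- Every N-model induces an NS4 N-model which is equivalent along the Gödel
translation. -/
theorem stmt13 {W : Type*} (le : W → W → Prop)
    (hrefl : ∀ w, le w w)
    (htrans : ∀ a b c, le a b → le b c → le a c)
    (hanti : ∀ a b, le a b → le b a → a = b)
    (N : Set W → Set W)
    (hNup : ∀ X, IsUpset le X → IsUpset le (N X))
    (hNloc : ∀ X Y, IsUpset le X → IsUpset le Y → N X ∩ Y = N (X ∩ Y) ∩ Y)
    (V : ℕ → Set W) (hV : ∀ p, IsUpset le (V p)) :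
    (∀ X : Set W, IsUpset le (NStar le N X)) ∧
    (∀ (w : W) (X : Set W),
        w ∈ NStar le N X ↔ w ∈ NStar le N (X ∩ {v | le w v})) ∧
    (∀ (φ : Form) (w : W),
        w ∈ Sat le N V φ ↔ w ∈ MSat le (NStar le N) V (godelT φ)) := by
  have upState : ∀ w : W, IsUpset le {v | le w v} :=
    fun w a b hab ha => htrans _ _ _ ha hab
  have part1 : ∀ X : Set W, IsUpset le (NStar le N X) := by
    intro X w v hwv ⟨Y, hYup, hXY, hwN⟩
    refine ⟨Y, hYup, ?_, hNup Y hYup hwv hwN⟩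
    ext u
    constructor
    · rintro ⟨hu, hvu⟩
      have : u ∈ Y ∩ {x | le w x} := hXY ▸ ⟨hu, htrans _ _ _ hwv hvu⟩
      exact ⟨this.1, hvu⟩
    · rintro ⟨hu, hvu⟩
      have : u ∈ X ∩ {x | le w x} := hXY ▸ Set.mem_inter hu (htrans _ _ _ hwv hvu)
      exact ⟨this.1, hvu⟩
  have part2 : ∀ (w : W) (X : Set W),
      w ∈ NStar le N X ↔ w ∈ NStar le N (X ∩ {v | le w v}) := by
    intro w X
    constructor
    · rintro ⟨Y, hYup, hXY, hwN⟩
      refine ⟨Y, hYup, ?_, hwN⟩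
      rw [Set.inter_assoc, Set.inter_self]; exact hXY
    · rintro ⟨Y, hYup, hXY, hwN⟩
      refine ⟨Y, hYup, ?_, hwN⟩
      rw [Set.inter_assoc, Set.inter_self] at hXY; exact hXY
  refine ⟨part1, part2, ?_⟩
  intro φ
  induction φ with
  | var p =>
      intro w
      constructor
      · intro hw v hwv; exact hV p hwv hw
      · intro h; exact h w (hrefl w)
  | top => intro w; simp [Sat, MSat, godelT]
  | and φ ψ ihφ ihψ =>
      intro w
      exact and_congr (ihφ w) (ihψ w)
  | or φ ψ ihφ ihψ =>
      intro w
      exact or_congr (ihφ w) (ihψ w)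
  | imp φ ψ ihφ ihψ =>
      intro w
      constructor
      · intro hw v hwv hv
        exact (ihψ v).mp (hw v hwv ((ihφ v).mpr hv))
      · intro hw v hwv hv
        exact (ihψ v).mpr (hw v hwv ((ihφ v).mp hv))
  | neg φ ih =>
      intro w
      have hset : MSat le (NStar le N) V (godelT φ) = Sat le N V φ := by
        ext v; exact (ih v).symm
      have hφup : IsUpset le (Sat le N V φ) := satUpset le htrans N hNup V hV φ
      show w ∈ N (Sat le N V φ) ↔ w ∈ NStar le N (MSat le (NStar le N) V (godelT φ))
      rw [hset]
      constructor
      · intro hw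
        exact ⟨Sat le N V φ, hφup, rfl, hw⟩
      · rintro ⟨Y, hYup, hXY, hwN⟩
        have h1 : w ∈ N Y ∩ {v | le w v} := ⟨hwN, hrefl w⟩
        rw [hNloc Y {v | le w v} hYup (upState w)] at h1
        rw [← hXY] at h1
        have h2 := (hNloc (Sat le N V φ) {v | le w v} hφup (upState w)).symm ▸ h1
        exact h2.1
end
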